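/- For every admissible quadruple (n,m,ν,μ), the squared weighted L² norm of the interior toroidal harmonic I_{n,m}^{ν,μ}(η,θ,φ) = √(cosh η − cos θ) · (Q_{n−1/2}^m(cosh η)/q_{n,m}) · Φ_n^ν(θ) Φ_m^μ(φ) over the interior toroidal domain is finite and equals ∫_{η₀}^{∞} ∫_{−π}^{π} ∫_{−π}^{π} (I_{n,m}^{ν,μ})² · w · J dφ dθ dη = π² (1+δ_{n,0}) (1+δ_{m,0}) ∫_{η₀}^{∞} ( Q_{n−1/2}^m(cosh η)/q_{n,m} )² dη, where w(η,θ) = (cosh η − cos θ)²/sinh η, J(η,θ) = sinh η/(cosh η − cos θ)³, and δ is the Kronecker delta. -/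

import Mathlib

open Real MeasureTheory intervalIntegral Filter Topology

/-- Associated Legendre function of the second kind of half-integer degree,
`Q_{n-1/2}^m(t)`, defined via its real integral representation (valid for `t > 1`). -/
noncomputable def Qh (n m : ℕ) (t : ℝ) : ℝ :=
  ((-1 : ℝ) ^ m / (2 : ℝ) ^ ((n : ℝ) + 1 / 2)) *
    (Real.Gamma ((n : ℝ) + (m : ℝ) + 1 / 2) / Real.Gamma ((n : ℝ) + 1 / 2)) *
    (t ^ 2 - 1) ^ ((m : ℝ) / 2) *
    ∫ s in (-1 : ℝ)..1, (1 - s ^ 2) ^ ((n : ℝ) - 1 / 2) * (t - s) ^ (-((n : ℝ) + (m : ℝ) + 1 / 2))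

/-- `q_{n,m} = Q_{n-1/2}^m(cosh η₀)`. -/
noncomputable def qh (η₀ : ℝ) (n m : ℕ) : ℝ := Qh n m (Real.cosh η₀)

/-- `Φ_n^{+1}(θ) = cos (n θ)`, `Φ_n^{-1}(θ) = sin (n θ)`. -/
noncomputable def Phi (ν : ℤ) (n : ℤ) (θ : ℝ) : ℝ :=
  if ν = 1 then Real.cos ((n : ℝ) * θ) else Real.sin ((n : ℝ) * θ)

/-- A quadruple `(n, m, ν, μ)` is admissible. -/
def Admissible (n m : ℕ) (ν μ : ℤ) : Prop :=
  (ν = 1 ∨ ν = -1) ∧ (μ = 1 ∨ μ = -1) ∧ ¬(n = 0 ∧ ν = -1) ∧ ¬(m = 0 ∧ μ = -1)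

/-- Toroidal Neumann constant `ρ_{n,m}(η₀)` (`n ≥ 1`). -/
noncomputable def rhoT (η₀ : ℝ) (n m : ℕ) : ℝ :=
  if n = 1 then
    (1 / (2 * Real.sinh η₀)) *
      (Real.cosh η₀ + (2 * (m : ℝ) - 1) * qh η₀ 1 m / qh η₀ 0 m)
  else
    (1 / (4 * Real.sinh η₀)) *
      ((2 * (n : ℝ) - 1) * Real.cosh η₀ +
        (2 * ((m : ℝ) - (n : ℝ)) + 1) * qh η₀ n m / qh η₀ (n - 1) m)

/-- Toroidal Neumann constant `σ_{n,m}(η₀)`. -/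
noncomputable def sigmaT (η₀ : ℝ) (n m : ℕ) : ℝ :=
  (-1 / (2 * Real.sinh η₀)) *
    ((2 * (n : ℝ) * Real.cosh η₀ ^ 2 + 1) +
      (2 * ((m : ℝ) - (n : ℝ)) - 1) * Real.cosh η₀ * qh η₀ (n + 1) m / qh η₀ n m)

/-- Toroidal Neumann constant `τ_{n,m}(η₀)`. -/
noncomputable def tauT (η₀ : ℝ) (n m : ℕ) : ℝ :=
  (1 / (4 * Real.sinh η₀)) *
    ((2 * (n : ℝ) + 3) * Real.cosh η₀ +
      (2 * ((m : ℝ) - (n : ℝ)) - 3) * qh η₀ (n + 2) m / qh η₀ (n + 1) m)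

/-- The normal derivative `N_{n,m}^{ν,μ}(θ,φ)` of the interior toroidal harmonic
`I_{n,m}^{ν,μ}` on the torus `η = η₀`. -/
noncomputable def NDer (η₀ : ℝ) (n m : ℕ) (ν μ : ℤ) (θ φ : ℝ) : ℝ :=
  (Real.sqrt (Real.cosh η₀ - Real.cos θ) / (4 * Real.sinh η₀)) * Phi μ (m : ℤ) φ *
    (Phi ν ((n : ℤ) - 1) θ *
        ((1 + 2 * (n : ℝ)) * Real.cosh η₀ -
          (2 * ((n : ℝ) - (m : ℝ)) + 1) * qh η₀ (n + 1) m / qh η₀ n m) -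
      2 * Phi ν (n : ℤ) θ *
        ((2 * (n : ℝ) * Real.cosh η₀ ^ 2 + 1) -
          (2 * ((n : ℝ) - (m : ℝ)) + 1) * Real.cosh η₀ * qh η₀ (n + 1) m / qh η₀ n m) +
      Phi ν ((n : ℤ) + 1) θ *
        ((1 + 2 * (n : ℝ)) * Real.cosh η₀ -
          (2 * ((n : ℝ) - (m : ℝ)) + 1) * qh η₀ (n + 1) m / qh η₀ n m))

/-- Interior toroidal harmonic `I_{n,m}^{ν,μ}[η₀]` in toroidal coordinates. -/
noncomputable def Ih (η₀ : ℝ) (n m : ℕ) (ν μ : ℤ) (η θ φ : ℝ) : ℝ :=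
  Real.sqrt (Real.cosh η - Real.cos θ) *
    (Qh n m (Real.cosh η) / Qh n m (Real.cosh η₀)) * Phi ν (n : ℤ) θ * Phi μ (m : ℤ) φ

set_option maxHeartbeats 1000000
section ToroidalAux

lemma intervalIntegrable_one_sub_sq_rpow {c : ℝ} (hc : -1 < c) :
    IntervalIntegrable (fun s : ℝ => (1 - s ^ 2) ^ c) volume (-1) 1 := by
  have hmeas : Measurable fun s : ℝ => (1 - s ^ 2) ^ c :=
    (measurable_const.sub (measurable_id.pow_const 2)).pow_const c
  have key : ∀ s : ℝ, s ∈ Set.Ioc (0:ℝ) 1 →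
      |(1 - s ^ 2) ^ c| ≤ max 1 ((2:ℝ)^c) * (1 - s) ^ c := by
    intro s hs
    have h1 : (0:ℝ) ≤ 1 - s := by linarith [hs.2]
    have h2 : (0:ℝ) ≤ 1 + s := by linarith [hs.1.le]
    have hfac : 1 - s ^ 2 = (1 - s) * (1 + s) := by ring
    rw [abs_of_nonneg (Real.rpow_nonneg (by nlinarith [hs.1.le, hs.2] : (0:ℝ) ≤ 1 - s^2) c), hfac,
      Real.mul_rpow h1 h2, mul_comm (max 1 ((2:ℝ)^c)) _]
    apply mul_le_mul_of_nonneg_left _ (Real.rpow_nonneg h1 c)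
    rcases le_or_gt 0 c with h | h
    · exact le_max_of_le_right (Real.rpow_le_rpow h2 (by linarith [hs.2]) h)
    · refine le_max_of_le_left ?_
      calc (1+s)^c ≤ 1^c := Real.rpow_le_rpow_of_nonpos one_pos (by linarith [hs.1.le]) h.le
      _ = 1 := Real.one_rpow c
  have hbase : IntervalIntegrable (fun x : ℝ => x ^ c) volume 0 1 :=
    intervalIntegral.intervalIntegrable_rpow' hc
  have hg1 : IntervalIntegrable (fun s : ℝ => (1 - s) ^ c) volume 0 1 := by
    have := hbase.comp_sub_left 1
    norm_num at this
    exact this.symm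
  have h01 : IntervalIntegrable (fun s : ℝ => (1 - s ^ 2) ^ c) volume 0 1 := by
    apply IntervalIntegrable.mono_fun' (hg1.const_mul (max 1 ((2:ℝ)^c)))
      hmeas.aestronglyMeasurable
    filter_upwards [MeasureTheory.ae_restrict_mem measurableSet_uIoc] with s hs
    rw [Set.uIoc_of_le (by norm_num : (0:ℝ) ≤ 1)] at hs
    exact key s hs
  have hneg : IntervalIntegrable (fun s : ℝ => (1 - s ^ 2) ^ c) volume (-1) 0 := by
    have := h01.comp_sub_left 0
    simp only [zero_sub, sub_zero] at this
    simpa [neg_sq] using this.symm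
  exact hneg.trans h01


lemma hc_cast (n : ℕ) : (-1:ℝ) < (n:ℝ) - 1/2 := by
  have : (0:ℝ) ≤ n := Nat.cast_nonneg n; linarith

lemma Qh_integrand_intble (n m : ℕ) {t : ℝ} (ht : 1 < t) :
    IntervalIntegrable
      (fun s : ℝ => (1 - s ^ 2) ^ ((n:ℝ) - 1/2) * (t - s) ^ (-((n:ℝ) + (m:ℝ) + 1/2)))
      volume (-1) 1 := by
  have hbase := intervalIntegrable_one_sub_sq_rpow (hc_cast n)
  apply IntervalIntegrable.mono_fun'
    (hbase.mul_const ((t-1) ^ (-((n:ℝ) + (m:ℝ) + 1/2))))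
    ((((measurable_const.sub (measurable_id.pow_const 2)).pow_const _).mul
      ((measurable_const.sub measurable_id).pow_const _)).aestronglyMeasurable)
  filter_upwards [MeasureTheory.ae_restrict_mem measurableSet_uIoc] with s hs
  rw [Set.uIoc_of_le (by norm_num : (-1:ℝ) ≤ 1)] at hs
  have h1 : (0:ℝ) ≤ 1 - s ^ 2 := by nlinarith [hs.1, hs.2]
  have h2 : (0:ℝ) < t - 1 := by linarith
  have h3 : t - 1 ≤ t - s := by linarith [hs.2]
  have hp : -((n:ℝ) + (m:ℝ) + 1/2) ≤ 0 := by
    have : (0:ℝ) ≤ (n:ℝ) + (m:ℝ) + 1/2 := by positivity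
    linarith
  simp only [Pi.mul_apply, Pi.sub_apply, id_eq, Real.norm_eq_abs]
  rw [abs_mul, abs_of_nonneg (Real.rpow_nonneg h1 _),
    abs_of_nonneg (Real.rpow_nonneg (by linarith : (0:ℝ) ≤ t - s) _)]
  exact mul_le_mul_of_nonneg_left (Real.rpow_le_rpow_of_nonpos h2 h3 hp)
    (Real.rpow_nonneg h1 _)

lemma Qh_sq_bound (n m : ℕ) {η₀ : ℝ} (hη₀ : 0 < η₀) :
    ∃ C : ℝ, ∀ η ∈ Set.Ioi η₀, (Qh n m (Real.cosh η))^2 ≤ C * Real.exp (-η) := by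
  classical
  set p : ℝ := (n:ℝ) + (m:ℝ) + 1/2 with hp
  set B : ℝ := ∫ s in (-1:ℝ)..1, (1 - s ^ 2) ^ ((n:ℝ) - 1/2) with hB
  have hBnn : 0 ≤ B := by
    apply intervalIntegral.integral_nonneg (by norm_num)
    intro s hs
    exact Real.rpow_nonneg (by nlinarith [hs.1, hs.2]) _
  set c0 : ℝ := ((-1 : ℝ) ^ m / (2 : ℝ) ^ ((n : ℝ) + 1 / 2)) *
    (Real.Gamma ((n : ℝ) + (m : ℝ) + 1 / 2) / Real.Gamma ((n : ℝ) + 1 / 2)) with hc0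
  set α : ℝ := (1 - 1 / Real.cosh η₀) / 2 with hα
  have hcosh0 : 1 < Real.cosh η₀ := Real.one_lt_cosh.mpr hη₀.ne'
  have hαpos : 0 < α := by
    have h : 1 / Real.cosh η₀ < 1 := by
      rw [div_lt_one (by positivity)]; exact hcosh0
    rw [hα]; linarith
  set K : ℝ := |c0| * B * ((2:ℝ) ^ ((m:ℝ)/2) * α ^ ((m:ℝ)/2 - p)) with hK
  refine ⟨K^2, fun η hη => ?_⟩
  have hηpos : 0 < η := hη₀.trans hη
  set t : ℝ := Real.cosh η with htdef
  have ht : 1 < t := Real.one_lt_cosh.mpr hηpos.ne'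
  have hfint := Qh_integrand_intble n m (t := t) ht
  have habs : |∫ s in (-1:ℝ)..1, (1 - s ^ 2) ^ ((n:ℝ) - 1/2) * (t - s) ^ (-p)| ≤ B * (t-1) ^ (-p) := by
    refine (intervalIntegral.abs_integral_le_integral_abs (by norm_num)).trans ?_
    have hmono2 : ∫ s in (-1:ℝ)..1, |(1 - s ^ 2) ^ ((n:ℝ) - 1/2) * (t - s) ^ (-p)|
        ≤ ∫ s in (-1:ℝ)..1, (1 - s ^ 2) ^ ((n:ℝ) - 1/2) * (t-1) ^ (-p) := by
      apply intervalIntegral.integral_mono_on (by norm_num) hfint.abs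
        ((intervalIntegrable_one_sub_sq_rpow (hc_cast n)).mul_const _)
      intro s hs
      have h1 : (0:ℝ) ≤ 1 - s ^ 2 := by nlinarith [hs.1, hs.2]
      rw [abs_mul, abs_of_nonneg (Real.rpow_nonneg h1 _),
        abs_of_nonneg (Real.rpow_nonneg (by linarith [hs.2] : (0:ℝ) ≤ t - s) _)]
      refine mul_le_mul_of_nonneg_left
        (Real.rpow_le_rpow_of_nonpos (by linarith) (by linarith [hs.2]) ?_)
        (Real.rpow_nonneg h1 _)
      have hpnn : (0:ℝ) ≤ p := by rw [hp]; positivity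
      linarith
    refine hmono2.trans ?_
    rw [hB, intervalIntegral.integral_mul_const]
  have hQabs : |Qh n m t| ≤ |c0| * ((t^2-1) ^ ((m:ℝ)/2) * (B * (t-1) ^ (-p))) := by
    have hrw : Qh n m t = c0 * (t^2-1) ^ ((m:ℝ)/2) *
        ∫ s in (-1:ℝ)..1, (1 - s ^ 2) ^ ((n:ℝ) - 1/2) * (t - s) ^ (-p) := by
      rw [Qh, hc0, hp]
    rw [hrw, abs_mul, abs_mul,
      abs_of_nonneg (Real.rpow_nonneg (by nlinarith : (0:ℝ) ≤ t^2-1) _), mul_assoc]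
    exact mul_le_mul_of_nonneg_left
      (mul_le_mul_of_nonneg_left habs (Real.rpow_nonneg (by nlinarith) _)) (abs_nonneg c0)
  have hexp2 : Real.exp η / 2 ≤ t := by
    rw [htdef, Real.cosh_eq]; have := Real.exp_pos (-η); linarith
  have hexp3 : t ≤ Real.exp η := by
    rw [htdef, Real.cosh_eq]
    have h1 : Real.exp (-η) ≤ Real.exp η := Real.exp_le_exp.mpr (by linarith)
    linarith
  have hmono : Real.cosh η₀ ≤ t := by
    rw [htdef]
    exact (Real.cosh_lt_cosh.mpr (by rw [abs_of_pos hη₀, abs_of_pos hηpos]; exact hη)).le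
  have ht1 : α * Real.exp η ≤ t - 1 := by
    have hβ : (1 / Real.cosh η₀) * Real.cosh η₀ = 1 := by field_simp
    have hβpos : 0 < 1 / Real.cosh η₀ := by positivity
    have hβlt : 1 / Real.cosh η₀ < 1 := by rw [div_lt_one (by positivity)]; exact hcosh0
    rw [hα]
    nlinarith [mul_nonneg (by linarith : (0:ℝ) ≤ 1 - 1/Real.cosh η₀)
        (by linarith : (0:ℝ) ≤ 2*t - Real.exp η),
      mul_nonneg hβpos.le (by linarith : (0:ℝ) ≤ t - Real.cosh η₀)]
  have hmq : ((m:ℝ)/2 - p) ≤ 0 := by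
    rw [hp]
    have h1 : (0:ℝ) ≤ (n:ℝ) := Nat.cast_nonneg n
    have h2 : (0:ℝ) ≤ (m:ℝ) := Nat.cast_nonneg m
    linarith
  have key : (t^2-1) ^ ((m:ℝ)/2) * (t-1) ^ (-p)
      ≤ (2:ℝ) ^ ((m:ℝ)/2) * α ^ ((m:ℝ)/2 - p) * Real.exp (-((n:ℝ)+1/2) * η) := by
    have b1 : (t+1) ^ ((m:ℝ)/2) ≤ (2*Real.exp η) ^ ((m:ℝ)/2) :=
      Real.rpow_le_rpow (by linarith) (by linarith) (by positivity)
    have b2 : (t-1) ^ ((m:ℝ)/2 - p) ≤ (α*Real.exp η) ^ ((m:ℝ)/2 - p) :=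
      Real.rpow_le_rpow_of_nonpos (by positivity) ht1 hmq
    calc (t^2-1) ^ ((m:ℝ)/2) * (t-1) ^ (-p)
        = (t+1) ^ ((m:ℝ)/2) * (t-1) ^ ((m:ℝ)/2 - p) := by
          rw [show t^2 - 1 = (t-1)*(t+1) by ring,
            Real.mul_rpow (by linarith) (by linarith),
            show (m:ℝ)/2 - p = (m:ℝ)/2 + (-p) by ring,
            Real.rpow_add (by linarith : (0:ℝ) < t-1)]
          ring
      _ ≤ (2*Real.exp η) ^ ((m:ℝ)/2) * (α*Real.exp η) ^ ((m:ℝ)/2 - p) :=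
          mul_le_mul b1 b2 (Real.rpow_nonneg (by linarith) _)
            (Real.rpow_nonneg (by positivity) _)
      _ = (2:ℝ) ^ ((m:ℝ)/2) * α ^ ((m:ℝ)/2 - p) * Real.exp (-((n:ℝ)+1/2) * η) := by
          rw [Real.mul_rpow (by norm_num) (Real.exp_pos η).le,
            Real.mul_rpow hαpos.le (Real.exp_pos η).le,
            ← Real.exp_mul, ← Real.exp_mul,
            show -((n:ℝ)+1/2)*η = η*((m:ℝ)/2) + η*((m:ℝ)/2 - p) by rw [hp]; ring,
            Real.exp_add]
          ring
  have hQ2 : |Qh n m t| ≤ K * Real.exp (-((n:ℝ)+1/2)*η) := by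
    refine hQabs.trans ?_
    have hre : |c0| * ((t^2-1)^((m:ℝ)/2) * (B * (t-1)^(-p)))
        = (|c0| * B) * ((t^2-1)^((m:ℝ)/2) * (t-1)^(-p)) := by ring
    rw [hre, hK]
    calc (|c0| * B) * ((t^2-1)^((m:ℝ)/2)*(t-1)^(-p))
        ≤ (|c0| * B) * ((2:ℝ)^((m:ℝ)/2)*α^((m:ℝ)/2-p) * Real.exp (-((n:ℝ)+1/2)*η)) :=
          mul_le_mul_of_nonneg_left key (mul_nonneg (abs_nonneg _) hBnn)
      _ = _ := by ring
  calc (Qh n m t)^2 = |Qh n m t|^2 := (sq_abs _).symm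
  _ ≤ (K * Real.exp (-((n:ℝ)+1/2)*η))^2 := by
      apply pow_le_pow_left₀ (abs_nonneg _) hQ2
  _ = K^2 * (Real.exp (-((n:ℝ)+1/2)*η))^2 := by ring
  _ ≤ K^2 * Real.exp (-η) := by
      refine mul_le_mul_of_nonneg_left ?_ (sq_nonneg K)
      rw [sq, ← Real.exp_add]
      apply Real.exp_le_exp.mpr
      have h1 : (0:ℝ) ≤ (n:ℝ) := Nat.cast_nonneg n
      nlinarith [hηpos.le]


lemma measurable_Qh_comp (n m : ℕ) : Measurable fun η : ℝ => Qh n m (Real.cosh η) := by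
  have h1 : Measurable fun t : ℝ =>
      ∫ s in (-1:ℝ)..1, (1 - s ^ 2) ^ ((n:ℝ) - 1/2) * (t - s) ^ (-((n:ℝ) + (m:ℝ) + 1/2)) := by
    have heq : (fun t : ℝ =>
        ∫ s in (-1:ℝ)..1, (1 - s ^ 2) ^ ((n:ℝ) - 1/2) * (t - s) ^ (-((n:ℝ) + (m:ℝ) + 1/2)))
        = fun t : ℝ => ∫ s in Set.Ioc (-1:ℝ) 1,
            (1 - s ^ 2) ^ ((n:ℝ) - 1/2) * (t - s) ^ (-((n:ℝ) + (m:ℝ) + 1/2)) := by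
      funext t
      exact intervalIntegral.integral_of_le (by norm_num)
    rw [heq]
    have hsm : StronglyMeasurable fun p : ℝ × ℝ =>
        (1 - p.2 ^ 2) ^ ((n:ℝ) - 1/2) * (p.1 - p.2) ^ (-((n:ℝ) + (m:ℝ) + 1/2)) :=
      (((measurable_const.sub (measurable_snd.pow_const 2)).pow_const _).mul
        ((measurable_fst.sub measurable_snd).pow_const _)).stronglyMeasurable
    exact hsm.integral_prod_right'.measurable
  have hcosh : Measurable Real.cosh := Real.continuous_cosh.measurable
  unfold Qh
  exact (measurable_const.mul
    (((hcosh.pow_const 2).sub measurable_const).pow_const _)).mul (h1.comp hcosh)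

lemma continuous_phi (ν k : ℤ) : Continuous (Phi ν k) := by
  unfold Phi
  by_cases h : ν = 1 <;> simp only [h, if_true, if_false] <;> fun_prop

lemma phi_sq_integral (ν : ℤ) (k : ℕ) (hν : ν = 1 ∨ ν = -1) (h : ¬(k = 0 ∧ ν = -1)) :
    ∫ θ in (-π)..π, (Phi ν (k:ℤ) θ)^2 = π * (1 + if k = 0 then (1:ℝ) else 0) := by
  rcases hν with hν | hν
  · subst hν
    simp only [Phi, reduceIte, Int.cast_natCast]
    rcases Nat.eq_zero_or_pos k with hk | hk
    · subst hk
      simp only [Nat.cast_zero, zero_mul, Real.cos_zero, one_pow, if_pos rfl]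
      rw [intervalIntegral.integral_const]
      simp; ring
    · have hk0 : (k:ℝ) ≠ 0 := by positivity
      have := intervalIntegral.integral_comp_mul_left (fun x => Real.cos x ^ 2)
        (a := -π) (b := π) hk0
      rw [this, integral_cos_sq]
      have h2 : Real.sin ((k:ℝ) * π) = 0 := Real.sin_nat_mul_pi k
      have h3 : Real.sin ((k:ℝ) * (-π)) = 0 := by
        rw [mul_neg, Real.sin_neg, h2, neg_zero]
      rw [h2, h3, if_neg hk.ne', smul_eq_mul]
      field_simp
      ring
  · subst hν
    have hk : k ≠ 0 := fun hk0 => h ⟨hk0, rfl⟩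
    simp only [Phi, if_neg (by decide : (-1:ℤ) ≠ 1), Int.cast_natCast]
    have hk0 : (k:ℝ) ≠ 0 := Nat.cast_ne_zero.mpr hk
    have := intervalIntegral.integral_comp_mul_left (fun x => Real.sin x ^ 2)
      (a := -π) (b := π) hk0
    rw [this, integral_sin_sq]
    have h2 : Real.sin ((k:ℝ) * π) = 0 := Real.sin_nat_mul_pi k
    have h3 : Real.sin ((k:ℝ) * (-π)) = 0 := by
      rw [mul_neg, Real.sin_neg, h2, neg_zero]
    rw [h2, h3, if_neg hk, smul_eq_mul]
    field_simp
    ring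


lemma integrableOn_Qh_sq (n m : ℕ) {η₀ : ℝ} (hη₀ : 0 < η₀) :
    MeasureTheory.IntegrableOn (fun η => (Qh n m (Real.cosh η))^2) (Set.Ioi η₀) := by
  obtain ⟨C, hC⟩ := Qh_sq_bound n m hη₀
  refine Integrable.mono
    ((exp_neg_integrableOn_Ioi η₀ (by norm_num : (0:ℝ) < 1)).const_mul C)
    (((measurable_Qh_comp n m).pow_const 2).aestronglyMeasurable) ?_
  rw [ae_restrict_iff' measurableSet_Ioi]
  refine Filter.Eventually.of_forall fun η hη => ?_
  rw [Real.norm_eq_abs, Real.norm_eq_abs, abs_of_nonneg (sq_nonneg _)]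
  calc (Qh n m (Real.cosh η))^2 ≤ C * Real.exp (-η) := hC η hη
    _ = C * Real.exp (-1 * η) := by rw [neg_one_mul]
    _ ≤ |C * Real.exp (-1 * η)| := le_abs_self _

end ToroidalAux

/-- squared weighted `L²` norm of an interior toroidal harmonic. -/
theorem toroidal_harmonic_norm (η₀ : ℝ) (hη₀ : 0 < η₀)
    (n m : ℕ) (ν μ : ℤ) (h : Admissible n m ν μ) :
    MeasureTheory.IntegrableOn
      (fun p : ℝ × ℝ × ℝ =>
        (Ih η₀ n m ν μ p.1 p.2.1 p.2.2) ^ 2 *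
          ((Real.cosh p.1 - Real.cos p.2.1) ^ 2 / Real.sinh p.1) *
          (Real.sinh p.1 / (Real.cosh p.1 - Real.cos p.2.1) ^ 3))
      (Set.Ioi η₀ ×ˢ Set.Icc (-π) π ×ˢ Set.Icc (-π) π) ∧
    (∫ η in Set.Ioi η₀, ∫ θ in (-π)..π, ∫ φ in (-π)..π,
        (Ih η₀ n m ν μ η θ φ) ^ 2 *
          ((Real.cosh η - Real.cos θ) ^ 2 / Real.sinh η) *
          (Real.sinh η / (Real.cosh η - Real.cos θ) ^ 3)) =
      π ^ 2 * (1 + if n = 0 then (1 : ℝ) else 0) * (1 + if m = 0 then (1 : ℝ) else 0) *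
        ∫ η in Set.Ioi η₀, (Qh n m (Real.cosh η) / Qh n m (Real.cosh η₀)) ^ 2 := by
  obtain ⟨hν, hμ, hnν, hmμ⟩ := h
  set q : ℝ := Qh n m (Real.cosh η₀) with hq
  have hgint : MeasureTheory.IntegrableOn
      (fun η => (Qh n m (Real.cosh η) / q)^2) (Set.Ioi η₀) := by
    by_cases hq0 : q = 0
    · have heq : (fun η => (Qh n m (Real.cosh η) / q)^2) = fun _ => (0:ℝ) := by
        funext η; rw [hq0, div_zero]; norm_num
      rw [heq]; exact integrableOn_zero
    · have heq : (fun η => (Qh n m (Real.cosh η) / q)^2)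
          = fun η => (q⁻¹)^2 * (Qh n m (Real.cosh η))^2 := by
        funext η; rw [div_eq_mul_inv]; ring
      rw [heq]
      exact (integrableOn_Qh_sq n m hη₀).const_mul _
  have hpt : ∀ η, η₀ < η → ∀ θ φ : ℝ,
      (Ih η₀ n m ν μ η θ φ)^2 * ((Real.cosh η - Real.cos θ)^2 / Real.sinh η) *
        (Real.sinh η / (Real.cosh η - Real.cos θ)^3)
      = (Qh n m (Real.cosh η) / q)^2 * ((Phi ν (n:ℤ) θ)^2 * (Phi μ (m:ℤ) φ)^2) := by
    intro η hη θ φ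
    have hηpos : 0 < η := hη₀.trans hη
    have hcosh : 1 < Real.cosh η := Real.one_lt_cosh.mpr hηpos.ne'
    have hpos : 0 < Real.cosh η - Real.cos θ := by
      have := Real.cos_le_one θ; linarith
    have hsinh : 0 < Real.sinh η := Real.sinh_pos_iff.mpr hηpos
    simp only [Ih, mul_pow, Real.sq_sqrt hpos.le, ← hq]
    generalize (Qh n m (Real.cosh η) / q) ^ 2 = X
    field_simp
  constructor
  · have hphi2 : MeasureTheory.Integrable
        (fun p : ℝ × ℝ => (Phi ν (n:ℤ) p.1)^2 * (Phi μ (m:ℤ) p.2)^2)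
        ((volume.restrict (Set.Icc (-π) π)).prod (volume.restrict (Set.Icc (-π) π))) :=
      Integrable.mul_prod
        (((continuous_phi ν (n:ℤ)).pow 2).integrableOn_Icc)
        (((continuous_phi μ (m:ℤ)).pow 2).integrableOn_Icc)
    have hG : MeasureTheory.IntegrableOn (fun p : ℝ × ℝ × ℝ =>
        (Qh n m (Real.cosh p.1) / q)^2 * ((Phi ν (n:ℤ) p.2.1)^2 * (Phi μ (m:ℤ) p.2.2)^2))
        (Set.Ioi η₀ ×ˢ Set.Icc (-π) π ×ˢ Set.Icc (-π) π) := by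
      rw [IntegrableOn, Measure.volume_eq_prod, ← Measure.prod_restrict, Measure.volume_eq_prod,
        ← Measure.prod_restrict]
      exact Integrable.mul_prod hgint hphi2
    refine hG.congr_fun (fun p hp => ?_)
      (measurableSet_Ioi.prod (measurableSet_Icc.prod measurableSet_Icc))
    exact (hpt p.1 hp.1 p.2.1 p.2.2).symm
  · have hinner : Set.EqOn
        (fun η => ∫ θ in (-π)..π, ∫ φ in (-π)..π,
          (Ih η₀ n m ν μ η θ φ)^2 * ((Real.cosh η - Real.cos θ)^2 / Real.sinh η) *
            (Real.sinh η / (Real.cosh η - Real.cos θ)^3))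
        (fun η => (π ^ 2 * (1 + if n = 0 then (1:ℝ) else 0) *
            (1 + if m = 0 then (1:ℝ) else 0)) * (Qh n m (Real.cosh η) / q)^2)
        (Set.Ioi η₀) := by
      intro η hη
      have hη' : η₀ < η := hη
      have h1 : ∀ θ : ℝ, (∫ φ in (-π)..π,
          (Ih η₀ n m ν μ η θ φ)^2 * ((Real.cosh η - Real.cos θ)^2 / Real.sinh η) *
            (Real.sinh η / (Real.cosh η - Real.cos θ)^3))
          = ((Qh n m (Real.cosh η) / q)^2 * (Phi ν (n:ℤ) θ)^2) *
              (π * (1 + if m = 0 then (1:ℝ) else 0)) := by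
        intro θ
        calc (∫ φ in (-π)..π,
            (Ih η₀ n m ν μ η θ φ)^2 * ((Real.cosh η - Real.cos θ)^2 / Real.sinh η) *
              (Real.sinh η / (Real.cosh η - Real.cos θ)^3))
            = ∫ φ in (-π)..π, ((Qh n m (Real.cosh η) / q)^2 * (Phi ν (n:ℤ) θ)^2) *
                (Phi μ (m:ℤ) φ)^2 := by
              refine intervalIntegral.integral_congr fun φ _ => ?_
              rw [hpt η hη' θ φ]; ring
          _ = ((Qh n m (Real.cosh η) / q)^2 * (Phi ν (n:ℤ) θ)^2) *
                ∫ φ in (-π)..π, (Phi μ (m:ℤ) φ)^2 := intervalIntegral.integral_const_mul _ _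
          _ = _ := by rw [phi_sq_integral μ m hμ hmμ]
      calc (∫ θ in (-π)..π, ∫ φ in (-π)..π,
            (Ih η₀ n m ν μ η θ φ)^2 * ((Real.cosh η - Real.cos θ)^2 / Real.sinh η) *
              (Real.sinh η / (Real.cosh η - Real.cos θ)^3))
          = ∫ θ in (-π)..π, ((Qh n m (Real.cosh η) / q)^2 * (Phi ν (n:ℤ) θ)^2) *
              (π * (1 + if m = 0 then (1:ℝ) else 0)) :=
            intervalIntegral.integral_congr fun θ _ => h1 θ
        _ = (∫ θ in (-π)..π, (Qh n m (Real.cosh η) / q)^2 * (Phi ν (n:ℤ) θ)^2) *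
              (π * (1 + if m = 0 then (1:ℝ) else 0)) :=
            intervalIntegral.integral_mul_const _ _
        _ = ((Qh n m (Real.cosh η) / q)^2 * ∫ θ in (-π)..π, (Phi ν (n:ℤ) θ)^2) *
              (π * (1 + if m = 0 then (1:ℝ) else 0)) := by
            rw [intervalIntegral.integral_const_mul]
        _ = ((Qh n m (Real.cosh η) / q)^2 * (π * (1 + if n = 0 then (1:ℝ) else 0))) *
              (π * (1 + if m = 0 then (1:ℝ) else 0)) := by
            rw [phi_sq_integral ν n hν hnν]
        _ = (π ^ 2 * (1 + if n = 0 then (1:ℝ) else 0) * (1 + if m = 0 then (1:ℝ) else 0)) *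
              (Qh n m (Real.cosh η) / q)^2 := by ring
    rw [MeasureTheory.setIntegral_congr_fun measurableSet_Ioi hinner,
      MeasureTheory.integral_const_mul]
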